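/- (Cauchy–Vandermonde determinant) Let n_1, n_2 ≥ 0, set n = n_1 + n_2, and let t_1, …, t_n and z_1, …, z_{n_2} be complex numbers with t_k ≠ z_j for all j, k. Then the n×n determinant whose first n_1 rows are (t_k^{i-1})_{1≤i≤n_1, 1≤k≤n} and whose last n_2 rows are (1/(t_k − z_j))_{1≤j≤n_2, 1≤k≤n} equals (−1)^{n_1 n_2 + n_2(n_2−1)/2} · ∏_{1≤j<k≤n} (t_k − t_j) · ∏_{1≤j<k≤n_2} (z_k − z_j) · ∏_{j=1}^{n_2} ∏_{k=1}^{n} (t_k − z_j)^{−1}. -/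

import Mathlib

open Finset Polynomial Matrix Equiv


open Fin.NatCast Fin.CommRing in
private lemma cv_rot_pow (m k : ℕ) (i : Fin (m+1)) :
    ((finRotate (m+1))^k) i = i + (k : Fin (m+1)) := by
  induction k generalizing i with
  | zero => simp
  | succ k ih =>
    rw [pow_succ, Equiv.Perm.mul_apply, finRotate_succ_apply, ih]
    push_cast
    ring

private lemma cv_sign_shift (N k : ℕ) (σ : Equiv.Perm (Fin N))
    (h : ∀ i : Fin N, (σ i : ℕ) = ((i : ℕ) + k) % N) :
    Equiv.Perm.sign σ = (-1)^((N-1)*k) := by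
  match N with
  | 0 =>
    have : σ = 1 := Equiv.ext fun i => i.elim0
    simp [this]
  | m+1 =>
    have : σ = (finRotate (m+1))^k := by
      apply Equiv.ext
      intro i
      apply Fin.ext
      rw [cv_rot_pow, h i, Fin.val_add, Fin.val_natCast,
        Nat.add_mod (i : ℕ) k, Nat.mod_eq_of_lt i.isLt]
    rw [this, map_pow, sign_finRotate, ← pow_mul]

private def cvσ (n₁ n₂ : ℕ) : Equiv.Perm (Fin (n₁+n₂)) :=
  finSumFinEquiv.symm.trans ((Equiv.sumComm (Fin n₁) (Fin n₂)).trans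
    ((finSumFinEquiv : Fin n₂ ⊕ Fin n₁ ≃ Fin (n₂+n₁)).trans (finCongr (Nat.add_comm n₂ n₁))))

private lemma cvσ_apply_val (n₁ n₂ : ℕ) (i : Fin (n₁+n₂)) :
    ((cvσ n₁ n₂) i : ℕ) = ((i : ℕ) + n₂) % (n₁+n₂) := by
  obtain ⟨s, rfl⟩ := finSumFinEquiv.surjective i
  cases s with
  | inl a =>
    have ha := a.isLt
    simp [cvσ, Nat.mod_eq_of_lt (by omega : (a:ℕ) + n₂ < n₁ + n₂)]
  | inr j =>
    have hj := j.isLt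
    have h2 : (n₁ + (j:ℕ) + n₂) % (n₁ + n₂) = (j:ℕ) := by
      have h3 : n₁ + (j:ℕ) + n₂ = (n₁ + n₂) + (j:ℕ) := by omega
      rw [h3, Nat.add_mod_left, Nat.mod_eq_of_lt (by omega : (j:ℕ) < n₁ + n₂)]
    simp [cvσ, h2]

private lemma cvσ_sign (n₁ n₂ : ℕ) :
    Equiv.Perm.sign (cvσ n₁ n₂) = (-1)^(n₁*n₂) := by
  rw [cv_sign_shift (n₁+n₂) n₂ _ (cvσ_apply_val n₁ n₂)]
  rcases n₂ with _ | c
  · simp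
  · have he : Even (c * (c+1)) := Nat.even_mul_succ_self c
    have : (n₁ + (c+1) - 1) * (c+1) = n₁ * (c+1) + c * (c+1) := by
      have : n₁ + (c+1) - 1 = n₁ + c := by omega
      rw [this]; ring
    rw [this, pow_add, he.neg_one_pow, mul_one]

private lemma cv_prod_Iio_eq_prod_Ioi {M : Type*} [CommMonoid M] {n : ℕ}
    (f : Fin n → Fin n → M) :
    ∏ k, ∏ j ∈ Finset.Iio k, f k j = ∏ j, ∏ k ∈ Finset.Ioi j, f k j :=
  Finset.prod_comm' (by simp)

private lemma cv_sum_card_Ioi (m : ℕ) :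
    ∑ j : Fin m, (Finset.Ioi j).card = m * (m - 1) / 2 := by
  simp only [Fin.card_Ioi]
  rw [Fin.sum_univ_eq_sum_range (fun j => m - 1 - j), ← Finset.sum_range_reflect]
  rw [← Finset.sum_range_id m]
  apply Finset.sum_congr rfl
  intro x hx
  simp only [Finset.mem_range] at hx
  omega

private lemma cv_prod_neg {n : ℕ} {s : Finset (Fin n)} (f : Fin n → ℂ) :
    ∏ j ∈ s, -f j = (-1)^s.card * ∏ j ∈ s, f j := by
  rw [← Finset.prod_const, ← Finset.prod_mul_distrib]
  simp

private lemma cv_flip_sign {m : ℕ} (v : Fin m → ℂ) :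
    ∏ j, ∏ k ∈ Finset.Ioi j, (v j - v k)
      = (-1)^(m * (m-1)/2) * ∏ j, ∏ k ∈ Finset.Ioi j, (v k - v j) := by
  have : ∀ j : Fin m, ∏ k ∈ Finset.Ioi j, (v j - v k)
      = (-1)^(Finset.Ioi j).card * ∏ k ∈ Finset.Ioi j, (v k - v j) := by
    intro j
    rw [← cv_prod_neg]
    apply Finset.prod_congr rfl
    intros; ring
  rw [Finset.prod_congr rfl (fun j _ => this j), Finset.prod_mul_distrib,
    Finset.prod_pow_eq_pow_sum, cv_sum_card_Ioi]

section CV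

variable (n₁ n₂ : ℕ) (t : Fin (n₁ + n₂) → ℂ) (z : Fin n₂ → ℂ)

theorem cauchy_vandermonde' 
    (htz : ∀ (j : Fin n₂) (k : Fin (n₁ + n₂)), t k ≠ z j)
    (hz : Function.Injective z) :
    (Matrix.of fun i k : Fin (n₁ + n₂) =>
        Sum.elim (fun a : Fin n₁ => t k ^ (a : ℕ))
          (fun j : Fin n₂ => (t k - z j)⁻¹) (finSumFinEquiv.symm i)).det
      = (-1 : ℂ) ^ (n₁ * n₂ + n₂ * (n₂ - 1) / 2) *
        (∏ k : Fin (n₁ + n₂), ∏ j ∈ Finset.Iio k, (t k - t j)) *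
        (∏ k : Fin n₂, ∏ j ∈ Finset.Iio k, (z k - z j)) *
        (∏ j : Fin n₂, ∏ k : Fin (n₁ + n₂), (t k - z j)⁻¹) := by
  classical
  set A : Matrix (Fin (n₁+n₂)) (Fin (n₁+n₂)) ℂ := Matrix.of fun i k : Fin (n₁ + n₂) =>
        Sum.elim (fun a : Fin n₁ => t k ^ (a : ℕ))
          (fun j : Fin n₂ => (t k - z j)⁻¹) (finSumFinEquiv.symm i) with hA
  set Z : ℂ[X] := ∏ j : Fin n₂, (X - C (z j)) with hZ
  set q : Fin n₂ → ℂ[X] := fun j => ∏ j' ∈ Finset.univ.erase j, (X - C (z j')) with hq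
  have hZmonic : Z.Monic := monic_prod_of_monic _ _ (fun j _ => monic_X_sub_C _)
  have hZdeg : Z.natDegree = n₂ := by
    rw [hZ, natDegree_prod _ _ (fun j _ => X_sub_C_ne_zero _)]
    simp
  have hqmonic : ∀ j, (q j).Monic := fun j =>
    monic_prod_of_monic _ _ (fun j' _ => monic_X_sub_C _)
  have hqdeg : ∀ j, (q j).natDegree = n₂ - 1 := by
    intro j
    rw [hq, natDegree_prod _ _ (fun j' _ => X_sub_C_ne_zero _)]
    simp [Finset.card_erase_of_mem]
  have hZeval : ∀ x, Z.eval x = ∏ j, (x - z j) := by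
    intro x; simp [hZ, eval_prod]
  have hqeval : ∀ j x, (q j).eval x = ∏ j' ∈ Finset.univ.erase j, (x - z j') := by
    intro j x; simp [hq, eval_prod]
  have hZne : ∀ k, Z.eval (t k) ≠ 0 := by
    intro k
    rw [hZeval]
    exact Finset.prod_ne_zero_iff.mpr (fun j _ => sub_ne_zero.mpr (htz j k))
  have hfactor : ∀ j, Z = (X - C (z j)) * q j := fun j =>
    (Finset.mul_prod_erase univ _ (Finset.mem_univ j)).symm
  have hkey : ∀ (j : Fin n₂) (k : Fin (n₁+n₂)),
      Z.eval (t k) * (t k - z j)⁻¹ = (q j).eval (t k) := by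
    intro j k
    have h1 : Z.eval (t k) = (t k - z j) * (q j).eval (t k) := by
      rw [hfactor j]; simp
    rw [h1, mul_comm (t k - z j), mul_assoc,
      mul_inv_cancel₀ (sub_ne_zero.mpr (htz j k)), mul_one]
  -- eval of q as a sum over Fin n₂ of coefficients
  have hqsum : ∀ (j : Fin n₂) (x : ℂ),
      ∑ m : Fin n₂, (q j).coeff (m : ℕ) * x ^ (m : ℕ) = (q j).eval x := by
    intro j x
    rw [Polynomial.eval_eq_sum_range' (n := n₂) (by rw [hqdeg j]; exact Nat.sub_lt j.pos Nat.one_pos),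
      ← Fin.sum_univ_eq_sum_range]
  set e : Fin n₁ ⊕ Fin n₂ ≃ Fin (n₁+n₂) := finSumFinEquiv with he
  set D : Matrix (Fin n₂) (Fin n₂) ℂ := Matrix.of fun j m => (q j).coeff (m : ℕ) with hD
  set Csum : Matrix (Fin n₁ ⊕ Fin n₂) (Fin n₁ ⊕ Fin n₂) ℂ := Matrix.fromBlocks 1 0 0 D with hC
  set B' : (Fin n₁ ⊕ Fin n₂) → ℂ[X] :=
    Sum.elim (fun a : Fin n₁ => X^(a:ℕ) * Z) (fun m : Fin n₂ => X^(m:ℕ)) with hB'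
  set Vs : Matrix (Fin n₁ ⊕ Fin n₂) (Fin n₁ ⊕ Fin n₂) ℂ :=
    Matrix.of fun m' k' => (B' m').eval (t (e k')) with hVs
  have hdecomp : (Matrix.of fun i k => Z.eval (t k) * A i k)
      = (Csum * Vs).submatrix e.symm e.symm := by
    ext i k
    obtain ⟨s, rfl⟩ := e.surjective i
    simp only [Matrix.submatrix_apply, Matrix.mul_apply, Matrix.of_apply,
      Equiv.symm_apply_apply, Equiv.apply_symm_apply, Fintype.sum_sum_type, hC, hA]
    cases s with
    | inl a =>
      simp only [Matrix.fromBlocks_apply₁₁, Matrix.fromBlocks_apply₁₂,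
        Matrix.of_apply, Sum.elim_inl, Matrix.zero_apply, zero_mul,
        Finset.sum_const_zero, add_zero, Matrix.one_apply, hVs, hB',
        Equiv.apply_symm_apply, ite_mul, one_mul, Finset.sum_ite_eq,
        Finset.mem_univ, if_true, eval_mul, eval_pow, eval_X]
      ring
    | inr j =>
      simp only [Matrix.fromBlocks_apply₂₁, Matrix.fromBlocks_apply₂₂,
        Matrix.of_apply, Sum.elim_inr, Matrix.zero_apply, zero_mul,
        Finset.sum_const_zero, zero_add, hVs, hB', hD,
        Equiv.apply_symm_apply, eval_pow, eval_X]
      rw [hqsum j (t k), hkey j k]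
  have hZT_ne : (∏ k, Z.eval (t k)) ≠ 0 :=
    Finset.prod_ne_zero_iff.mpr fun k _ => hZne k
  have hdet2 : (∏ k, Z.eval (t k)) * A.det = Csum.det * Vs.det := by
    rw [← Matrix.det_mul_row (fun k => Z.eval (t k)) A, hdecomp,
      Matrix.det_submatrix_equiv_self, Matrix.det_mul]
  set Vz : ℂ := ∏ i : Fin n₂, ∏ j ∈ Finset.Ioi i, (z j - z i) with hVz
  set Vt : ℂ := ∏ i : Fin (n₁+n₂), ∏ j ∈ Finset.Ioi i, (t j - t i) with hVt
  have hVz_ne : Vz ≠ 0 := by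
    have h := Matrix.det_vandermonde_ne_zero_iff.mpr hz
    rwa [Matrix.det_vandermonde] at h
  -- determinant of the coefficient block D
  have hDW : D * (Matrix.vandermonde z)ᵀ
      = Matrix.diagonal (fun j => ∏ j' ∈ Finset.univ.erase j, (z j - z j')) := by
    ext j k
    rw [Matrix.mul_apply]
    simp only [hD, Matrix.of_apply, Matrix.transpose_apply, Matrix.vandermonde_apply]
    rw [hqsum j (z k), hqeval]
    by_cases hjk : j = k
    · subst hjk
      rw [Matrix.diagonal_apply_eq]
    · rw [Matrix.diagonal_apply_ne _ hjk]
      exact Finset.prod_eq_zero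
        (Finset.mem_erase.mpr ⟨Ne.symm hjk, Finset.mem_univ k⟩) (by simp)
  have herase : ∀ j : Fin n₂, Finset.univ.erase j = Finset.Iio j ∪ Finset.Ioi j := by
    intro j
    ext x
    simp only [Finset.mem_erase, Finset.mem_univ, and_true, Finset.mem_union,
      Finset.mem_Iio, Finset.mem_Ioi]
    exact ne_iff_lt_or_gt
  have hdisj : ∀ j : Fin n₂, Disjoint (Finset.Iio j) (Finset.Ioi j) := by
    intro j
    refine Finset.disjoint_left.mpr ?_
    intro x hx hx2
    simp only [Finset.mem_Iio] at hx
    simp only [Finset.mem_Ioi] at hx2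
    exact absurd (hx.trans hx2) (lt_irrefl x)
  have hdiagprod : (∏ j : Fin n₂, ∏ j' ∈ Finset.univ.erase j, (z j - z j'))
      = Vz * ((-1)^(n₂*(n₂-1)/2) * Vz) := by
    have h1 : ∀ j : Fin n₂, ∏ j' ∈ Finset.univ.erase j, (z j - z j')
        = (∏ j' ∈ Finset.Iio j, (z j - z j')) * ∏ j' ∈ Finset.Ioi j, (z j - z j') := by
      intro j
      rw [herase j, Finset.prod_union (hdisj j)]
    rw [Finset.prod_congr rfl (fun j _ => h1 j), Finset.prod_mul_distrib]
    congr 1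
    · exact cv_prod_Iio_eq_prod_Ioi (fun k j => z k - z j)
    · exact cv_flip_sign z
  have hdetD : D.det = (-1)^(n₂*(n₂-1)/2) * Vz := by
    apply mul_right_cancel₀ hVz_ne
    have h2 : D.det * Vz = (D * (Matrix.vandermonde z)ᵀ).det := by
      rw [Matrix.det_mul, Matrix.det_transpose, Matrix.det_vandermonde]
    rw [h2, hDW, Matrix.det_diagonal, hdiagprod]
    ring
  have hdetCsum : Csum.det = (-1)^(n₂*(n₂-1)/2) * Vz := by
    rw [hC, Matrix.det_fromBlocks_zero₂₁, Matrix.det_one, one_mul, hdetD]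
  -- determinant of the Vandermonde-like block Vs
  set Bfin : Fin (n₁+n₂) → ℂ[X] := fun m =>
    if h : (m:ℕ) < n₂ then X^(m:ℕ) else X^((m:ℕ) - n₂) * Z with hBfin
  have hBdeg : ∀ m : Fin (n₁+n₂), (Bfin m).natDegree = m := by
    intro m
    by_cases h : (m:ℕ) < n₂
    · simp only [hBfin]
      rw [dif_pos h, natDegree_X_pow]
    · have hm := m.isLt
      simp only [hBfin]
      rw [dif_neg h]
      rw [natDegree_mul (pow_ne_zero _ X_ne_zero) hZmonic.ne_zero,
        natDegree_X_pow, hZdeg]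
      omega
  have hBmonic : ∀ m : Fin (n₁+n₂), (Bfin m).Monic := by
    intro m
    by_cases h : (m:ℕ) < n₂
    · simp only [hBfin]
      rw [dif_pos h]
      exact monic_X_pow _
    · simp only [hBfin]
      rw [dif_neg h]
      exact (monic_X_pow _).mul hZmonic
  set Wmat : Matrix (Fin (n₁+n₂)) (Fin (n₁+n₂)) ℂ :=
    Matrix.of fun i k => (Bfin i).eval (t k) with hW
  have hBσ : ∀ i : Fin (n₁+n₂), Bfin ((cvσ n₁ n₂) i) = B' (e.symm i) := by
    intro i
    obtain ⟨s, rfl⟩ := e.surjective i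
    have hval := cvσ_apply_val n₁ n₂ (e s)
    cases s with
    | inl a =>
      have ha := a.isLt
      have hev : ((e (Sum.inl a) : Fin (n₁+n₂)) : ℕ) = (a : ℕ) := by simp [he]
      rw [hev] at hval
      rw [Nat.mod_eq_of_lt (Nat.add_lt_add_right a.isLt n₂)] at hval
      simp only [Equiv.symm_apply_apply, hB', Sum.elim_inl, hBfin]
      rw [hval, dif_neg (by omega)]
      rw [Nat.add_sub_cancel]
    | inr j =>
      have hj := j.isLt
      have hev : ((e (Sum.inr j) : Fin (n₁+n₂)) : ℕ) = n₁ + (j : ℕ) := by simp [he]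
      rw [hev] at hval
      have h2 : (n₁ + (j:ℕ) + n₂) % (n₁ + n₂) = (j:ℕ) := by
        have h3 : n₁ + (j:ℕ) + n₂ = (n₁ + n₂) + (j:ℕ) := by omega
        rw [h3, Nat.add_mod_left, Nat.mod_eq_of_lt (by omega)]
      rw [h2] at hval
      simp only [Equiv.symm_apply_apply, hB', Sum.elim_inr, hBfin]
      rw [hval, dif_pos (by omega)]
  have hVsW : Vs.submatrix e.symm e.symm = Wmat.submatrix (cvσ n₁ n₂) id := by
    ext i k
    simp only [Matrix.submatrix_apply, hVs, Matrix.of_apply, hW, id_eq,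
      Equiv.apply_symm_apply, hBσ i]
  have hdetW : Wmat.det = Vt := by
    have h1 : Wmat = (Matrix.of fun i j => (Bfin j).eval (t i))ᵀ := by
      ext i k
      simp [hW]
    rw [h1, Matrix.det_transpose,
      ← Matrix.det_eval_matrixOfPolynomials_eq_det_vandermonde t Bfin hBdeg hBmonic,
      Matrix.det_vandermonde]
  have hdetVs : Vs.det = (-1)^(n₁*n₂) * Vt := by
    rw [← Matrix.det_submatrix_equiv_self e.symm Vs, hVsW, Matrix.det_permute,
      hdetW, cvσ_sign]
    push_cast
    ring
  -- assembling
  have hPt : (∏ k : Fin (n₁ + n₂), ∏ j ∈ Finset.Iio k, (t k - t j)) = Vt :=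
    cv_prod_Iio_eq_prod_Ioi (fun k j => t k - t j)
  have hPz : (∏ k : Fin n₂, ∏ j ∈ Finset.Iio k, (z k - z j)) = Vz :=
    cv_prod_Iio_eq_prod_Ioi (fun k j => z k - z j)
  have hPZ : (∏ j : Fin n₂, ∏ k : Fin (n₁+n₂), (t k - z j)⁻¹)
      = (∏ k, Z.eval (t k))⁻¹ := by
    rw [Finset.prod_congr rfl (fun k (_ : k ∈ Finset.univ) => hZeval (t k)),
      Finset.prod_comm, ← Finset.prod_inv_distrib]
    apply Finset.prod_congr rfl
    intro j _
    rw [← Finset.prod_inv_distrib]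
  rw [hPt, hPz, hPZ]
  apply mul_left_cancel₀ hZT_ne
  rw [hdet2, hdetCsum, hdetVs]
  field_simp
  ring

end CV

theorem cauchy_vandermonde (n₁ n₂ : ℕ)
    (t : Fin (n₁ + n₂) → ℂ) (z : Fin n₂ → ℂ)
    (htz : ∀ (j : Fin n₂) (k : Fin (n₁ + n₂)), t k ≠ z j) :
    (Matrix.of fun i k : Fin (n₁ + n₂) =>
        Sum.elim (fun a : Fin n₁ => t k ^ (a : ℕ))
          (fun j : Fin n₂ => (t k - z j)⁻¹) (finSumFinEquiv.symm i)).det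
      = (-1 : ℂ) ^ (n₁ * n₂ + n₂ * (n₂ - 1) / 2) *
        (∏ k : Fin (n₁ + n₂), ∏ j ∈ Finset.Iio k, (t k - t j)) *
        (∏ k : Fin n₂, ∏ j ∈ Finset.Iio k, (z k - z j)) *
        (∏ j : Fin n₂, ∏ k : Fin (n₁ + n₂), (t k - z j)⁻¹) := by
  classical
  by_cases hz : Function.Injective z
  · exact cauchy_vandermonde' n₁ n₂ t z htz hz
  · -- two equal rows, and the z-Vandermonde factor vanishes
    rw [Function.not_injective_iff] at hz
    obtain ⟨a, b, hab, hne⟩ := hz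
    have hdet : (Matrix.of fun i k : Fin (n₁ + n₂) =>
        Sum.elim (fun a : Fin n₁ => t k ^ (a : ℕ))
          (fun j : Fin n₂ => (t k - z j)⁻¹) (finSumFinEquiv.symm i)).det = 0 := by
      apply Matrix.det_zero_of_row_eq
        (i := finSumFinEquiv (Sum.inr a)) (j := finSumFinEquiv (Sum.inr b))
      · exact fun h => hne (Sum.inr_injective (finSumFinEquiv.injective h))
      · funext k
        simp [hab]
    have hprod : (∏ k : Fin n₂, ∏ j ∈ Finset.Iio k, (z k - z j)) = 0 := by
      rcases hne.lt_or_gt with h | h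
      · refine Finset.prod_eq_zero (Finset.mem_univ b) ?_
        refine Finset.prod_eq_zero (Finset.mem_Iio.mpr h) ?_
        rw [hab, sub_self]
      · refine Finset.prod_eq_zero (Finset.mem_univ a) ?_
        refine Finset.prod_eq_zero (Finset.mem_Iio.mpr h) ?_
        rw [hab, sub_self]
    rw [hdet, hprod]
    ring
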